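/- Let d ≥ 1, let g = χ_{[−1/2,1/2]} be the indicator function of [−1/2,1/2] ⊂ ℝ, and let Γ ⊂ S^{d−1} × ℝ be such that the map (u,m) ↦ mu is a bijection from Γ onto ℤ^d. Set Λ = {(m,n,u) : (u,m) ∈ Γ, n ∈ ℤ}. Then for every f ∈ L²(ℝ^d) with support contained in the ball B_{1/2}(0), Σ_{(m,n,u)∈Λ} |⟨f, g_{m,n,u}⟩|² = ‖f‖₂²; i.e., the system {g_{m,n,u}}_{(m,n,u)∈Λ} is a Parseval frame for this subspace of L²(ℝ^d). -/

import Mathlib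

open MeasureTheory Real Complex

noncomputable section

/-- The directional Gabor coefficient `⟨f, g_{m,n,u}⟩`. -/
def gaborCoef {d : ℕ} (f : EuclideanSpace ℝ (Fin d) → ℂ) (g : ℝ → ℂ)
    (m n : ℝ) (u : EuclideanSpace ℝ (Fin d)) : ℂ :=
  ∫ x : EuclideanSpace ℝ (Fin d),
    f x * Complex.exp ((-(2 * Real.pi * m * (inner ℝ u x : ℝ)) : ℝ) * Complex.I) *
      (starRingEnd ℂ) (g ((inner ℝ u x : ℝ) - n))

/-- The subset of `ℝ^d` consisting of points with integer coordinates, i.e. `ℤ^d ⊂ ℝ^d`. -/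
def intLattice (d : ℕ) : Set (EuclideanSpace ℝ (Fin d)) :=
  {x | ∀ i, ∃ k : ℤ, x i = (k : ℝ)}

namespace GaborAux

open AddCircle ContinuousMap Submodule Set

instance : Fact ((0:ℝ) < 1) := ⟨one_pos⟩

variable {d : ℕ}

abbrev Td (d : ℕ) := Fin d → AddCircle (1 : ℝ)

lemma volume_circle_eq : (volume : Measure (AddCircle (1:ℝ))) = haarAddCircle := by
  rw [volume_eq_smul_haarAddCircle]; simp

instance : IsProbabilityMeasure (volume : Measure (AddCircle (1:ℝ))) := by
  rw [volume_circle_eq]; infer_instance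

/-- The Fourier monomial on the `d`-torus. -/
def fpi (k : Fin d → ℤ) : C(Td d, ℂ) :=
  ⟨fun y => ∏ i, fourier (k i) (y i), by
    apply continuous_finset_prod
    intro i _
    exact (fourier (k i)).continuous.comp (continuous_apply i)⟩

lemma fpi_apply (k : Fin d → ℤ) (y : Td d) : fpi k y = ∏ i, fourier (k i) (y i) := rfl

lemma integral_fourier_conj_mul (i j : ℤ) :
    (∫ t : AddCircle (1:ℝ), (starRingEnd ℂ) (fourier i t) * fourier j t)
      = if i = j then 1 else 0 := by
  have h := (orthonormal_iff_ite.mp (@orthonormal_fourier 1 _)) i j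
  rw [ContinuousMap.inner_toLp] at h
  rw [volume_circle_eq]
  simpa only [mul_comm] using h

abbrev fpiLp (k : Fin d → ℤ) : Lp ℂ 2 (volume : Measure (Td d)) :=
  ContinuousMap.toLp (E := ℂ) 2 volume ℂ (fpi k)

lemma orthonormal_fpi : Orthonormal ℂ (fpiLp (d := d)) := by
  rw [orthonormal_iff_ite]
  intro k l
  rw [ContinuousMap.inner_toLp]
  have h1 : ∀ y : Td d, fpi l y * (starRingEnd ℂ) (fpi k y)
      = ∏ i, ((starRingEnd ℂ) (fourier (k i) (y i)) * fourier (l i) (y i)) := by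
    intro y
    rw [mul_comm, fpi_apply, fpi_apply, map_prod, Finset.prod_mul_distrib]
  simp_rw [h1]
  rw [MeasureTheory.integral_fintype_prod_volume_eq_prod
    (f := fun i t => (starRingEnd ℂ) (fourier (k i) t) * fourier (l i) t)]
  simp_rw [integral_fourier_conj_mul]
  by_cases h : k = l
  · subst h; simp
  · rw [if_neg h]
    obtain ⟨i, hi⟩ := Function.ne_iff.mp h
    exact Finset.prod_eq_zero (Finset.mem_univ i) (if_neg hi)

/-- The star subalgebra generated by the torus monomials. -/
def fpiSubalgebra (d : ℕ) : StarSubalgebra ℂ C(Td d, ℂ) where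
  toSubalgebra := Algebra.adjoin ℂ (Set.range (fpi (d := d)))
  star_mem' := by
    show Algebra.adjoin ℂ (range (fpi (d := d))) ≤
      star (Algebra.adjoin ℂ (range (fpi (d := d))))
    refine Algebra.adjoin_le ?_
    rintro - ⟨k, rfl⟩
    refine Algebra.subset_adjoin ⟨-k, ?_⟩
    ext y
    show fpi (-k) y = (starRingEnd ℂ) (fpi k y)
    rw [fpi_apply, fpi_apply, map_prod]
    refine Finset.prod_congr rfl fun i _ => ?_
    show fourier (-k i) (y i) = (starRingEnd ℂ) (fourier (k i) (y i))
    exact fourier_neg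

theorem fpiSubalgebra_coe :
    Subalgebra.toSubmodule (fpiSubalgebra d).toSubalgebra = span ℂ (range (fpi (d := d))) := by
  apply Algebra.adjoin_eq_span_of_subset
  refine Subset.trans ?_ Submodule.subset_span
  intro x hx
  refine Submonoid.closure_induction (fun _ => id) ⟨0, ?_⟩ ?_ hx
  · ext1 y
    show fpi 0 y = 1
    rw [fpi_apply]
    refine Finset.prod_eq_one fun i _ => ?_
    exact fourier_zero
  · rintro - - - - ⟨k, rfl⟩ ⟨l, rfl⟩
    refine ⟨k + l, ?_⟩
    ext1 y
    show fpi (k + l) y = fpi k y * fpi l y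
    simp_rw [fpi_apply, ← Finset.prod_mul_distrib]
    refine Finset.prod_congr rfl fun i _ => ?_
    show fourier (k i + l i) (y i) = _
    exact fourier_add

theorem fpiSubalgebra_separatesPoints : (fpiSubalgebra d).SeparatesPoints := by
  intro x y hxy
  obtain ⟨i, hi⟩ := Function.ne_iff.mp hxy
  refine ⟨_, ⟨fpi (Pi.single i 1), Algebra.subset_adjoin ⟨Pi.single i 1, rfl⟩, rfl⟩, ?_⟩
  dsimp only
  have hev : ∀ z : Td d, fpi (Pi.single i 1) z = fourier 1 (z i) := by
    intro z
    rw [fpi_apply]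
    rw [Finset.prod_eq_single i (fun j _ hj => by
      rw [Pi.single_eq_of_ne hj]; exact fourier_zero) (fun h => absurd (Finset.mem_univ i) h)]
    rw [Pi.single_eq_same]
  rw [hev, hev, fourier_one, fourier_one]
  contrapose! hi
  rw [Circle.coe_inj] at hi
  exact injective_toCircle one_ne_zero hi

theorem fpiSubalgebra_closure_eq_top : (fpiSubalgebra d).topologicalClosure = ⊤ :=
  ContinuousMap.starSubalgebra_topologicalClosure_eq_top_of_separatesPoints _
    fpiSubalgebra_separatesPoints

theorem span_fpi_closure_eq_top :
    (span ℂ (range (fpi (d := d)))).topologicalClosure = ⊤ := by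
  rw [← fpiSubalgebra_coe]
  exact congr_arg (Subalgebra.toSubmodule <| StarSubalgebra.toSubalgebra ·)
    fpiSubalgebra_closure_eq_top

theorem span_fpiLp_closure_eq_top :
    (span ℂ (range (fpiLp (d := d)))).topologicalClosure = ⊤ := by
  convert
    (ContinuousMap.toLp_denseRange ℂ (volume : Measure (Td d)) ℂ
      (by norm_num : (2 : ENNReal) ≠ ⊤)).topologicalClosure_map_submodule span_fpi_closure_eq_top
  · rfl
  erw [map_span, range_comp]
  simp only [ContinuousLinearMap.coe_coe]

/-- Hilbert basis of `L²` of the `d`-torus given by the monomials. -/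
def fpiBasis (d : ℕ) : HilbertBasis (Fin d → ℤ) ℂ (Lp ℂ 2 (volume : Measure (Td d))) :=
  HilbertBasis.mk orthonormal_fpi span_fpiLp_closure_eq_top.ge

/-- `k`-th Fourier coefficient of a function on the `d`-torus. -/
def piCoeff (f : Td d → ℂ) (k : Fin d → ℤ) : ℂ :=
  ∫ y : Td d, (starRingEnd ℂ) (fpi k y) * f y

theorem fpiBasis_repr (f : Lp ℂ 2 (volume : Measure (Td d))) (k : Fin d → ℤ) :
    (fpiBasis d).repr f k = piCoeff f k := by
  trans ∫ y : Td d, (starRingEnd ℂ) ((fpiLp k : Td d → ℂ) y) * f y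
  · rw [(fpiBasis d).repr_apply_apply f k, MeasureTheory.L2.inner_def]
    congr 1
    rw [show ⇑(fpiBasis d) = fpiLp (d := d) from HilbertBasis.coe_mk _ _]
    simp only [RCLike.inner_apply]
    exact funext fun a => mul_comm _ _
  · apply integral_congr_ae
    filter_upwards [ContinuousMap.coeFn_toLp (p := 2) (𝕜 := ℂ) volume (f := fpi k)] with y hy
    rw [hy]

/-- Parseval's identity on the `d`-torus. -/
theorem tsum_sq_piCoeff (f : Lp ℂ 2 (volume : Measure (Td d))) :
    ∑' k : Fin d → ℤ, ‖piCoeff f k‖ ^ 2 = ∫ y : Td d, ‖f y‖ ^ 2 := by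
  simp_rw [← fpiBasis_repr]
  have H₁ : ‖(fpiBasis d).repr f‖ ^ 2 = ∑' k, ‖(fpiBasis d).repr f k‖ ^ 2 := by
    apply_mod_cast lp.norm_rpow_eq_tsum ?_ ((fpiBasis d).repr f)
    norm_num
  have H₂ : ‖(fpiBasis d).repr f‖ ^ 2 = ‖f‖ ^ 2 := by simp
  have H₃ := congr_arg RCLike.re (@L2.inner_def (Td d) ℂ ℂ _ _ _ _ _ f f)
  rw [← integral_re] at H₃
  · simp only [← norm_sq_eq_re_inner (𝕜 := ℂ)] at H₃
    rw [← H₁, H₂, H₃]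
  · exact L2.integrable_inner f f

/-! ### Transfer between the cube and the torus -/

/-- the half-open unit cube centred at the origin -/
def box (d : ℕ) : Set (Fin d → ℝ) := Set.pi Set.univ fun _ => Ioc (-(1/2) : ℝ) (-(1/2) + 1)

lemma measurableSet_box : MeasurableSet (box d) :=
  MeasurableSet.univ_pi fun _ => measurableSet_Ioc

/-- coordinatewise quotient map onto the torus -/
def qpi (d : ℕ) : (Fin d → ℝ) → Td d := fun x i => (x i : AddCircle (1:ℝ))

lemma measurable_qpi : Measurable (qpi d) :=
  measurable_pi_lambda _ fun i => AddCircle.measurable_mk'.comp (measurable_pi_apply i)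

lemma pi_restrict_box :
    (Measure.pi fun _ : Fin d => (volume : Measure ℝ).restrict (Ioc (-(1/2) : ℝ) (-(1/2) + 1)))
      = (volume : Measure (Fin d → ℝ)).restrict (box d) := by
  refine Measure.pi_eq fun s hs => ?_
  rw [Measure.restrict_apply (MeasurableSet.univ_pi hs), box, ← Set.pi_inter_distrib,
    volume_pi_pi]
  exact Finset.prod_congr rfl fun i _ => (Measure.restrict_apply (hs i)).symm

lemma measurePreserving_qpi :
    MeasurePreserving (qpi d) ((volume : Measure (Fin d → ℝ)).restrict (box d))
      (volume : Measure (Td d)) := by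
  have h1 : MeasurePreserving (fun x : ℝ => (x : AddCircle (1:ℝ)))
      (volume.restrict (Ioc (-(1/2) : ℝ) (-(1/2) + 1))) volume :=
    AddCircle.measurePreserving_mk 1 (-(1/2))
  have h := MeasureTheory.measurePreserving_pi
    (fun _ : Fin d => (volume : Measure ℝ).restrict (Ioc (-(1/2) : ℝ) (-(1/2) + 1)))
    (fun _ => (volume : Measure (AddCircle (1:ℝ)))) (fun _ => h1)
  rwa [pi_restrict_box, ← volume_pi] at h

/-- representative in `(-1/2, 1/2]` of a point on the circle -/
def rep : AddCircle (1:ℝ) → ℝ := fun t =>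
  ((AddCircle.measurableEquivIoc 1 (-(1/2)) t : Ioc (-(1/2):ℝ) (-(1/2)+1)) : ℝ)

lemma measurable_rep : Measurable rep :=
  measurable_subtype_coe.comp (AddCircle.measurableEquivIoc 1 (-(1/2))).measurable

lemma rep_coe {x : ℝ} (hx : x ∈ Ioc (-(1/2) : ℝ) (-(1/2) + 1)) :
    rep (x : AddCircle (1:ℝ)) = x := by
  have : (equivIoc (1:ℝ) (-(1/2))) (x : AddCircle (1:ℝ)) = ⟨x, hx⟩ := by
    rw [Equiv.apply_eq_iff_eq_symm_apply]
    rfl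
  exact congrArg Subtype.val this

lemma integral_torus_eq {E : Type*} [NormedAddCommGroup E] [NormedSpace ℝ E]
    (φ : Td d → E) (hφ : AEStronglyMeasurable φ (volume : Measure (Td d))) :
    ∫ y, φ y = ∫ x in box d, φ (qpi d x) := by
  rw [← measurePreserving_qpi.map_eq, integral_map measurable_qpi.aemeasurable]
  rwa [measurePreserving_qpi.map_eq]

lemma fpi_qpi (k : Fin d → ℤ) (x : Fin d → ℝ) :
    fpi k (qpi d x) = Complex.exp (((2 * π * ∑ i, (k i : ℝ) * x i : ℝ)) * Complex.I) := by
  simp only [fpi_apply, qpi, fourier_coe_apply]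
  rw [← Complex.exp_sum]
  congr 1
  push_cast
  rw [Finset.mul_sum, Finset.sum_mul]
  exact Finset.sum_congr rfl fun i _ => by ring

lemma conj_fpi_qpi (k : Fin d → ℤ) (x : Fin d → ℝ) :
    (starRingEnd ℂ) (fpi k (qpi d x))
      = Complex.exp (((-(2 * π * ∑ i, (k i : ℝ) * x i) : ℝ)) * Complex.I) := by
  rw [fpi_qpi, ← Complex.exp_conj, map_mul, Complex.conj_I, Complex.conj_ofReal]
  congr 1
  push_cast
  ring

lemma abs_coord_le_norm (z : EuclideanSpace ℝ (Fin d)) (i : Fin d) : |z i| ≤ ‖z‖ := by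
  rw [EuclideanSpace.norm_eq]
  calc |z i| = Real.sqrt (‖z i‖ ^ 2) := by rw [Real.sqrt_sq_eq_abs]; simp [abs_abs]
    _ ≤ _ := by
        apply Real.sqrt_le_sqrt
        exact Finset.single_le_sum (f := fun j => ‖z j‖ ^ 2) (fun j _ => sq_nonneg _)
          (Finset.mem_univ i)

/-- **Parseval for the unit cube**, pulled back to `EuclideanSpace`. -/
theorem parseval_cube (f : EuclideanSpace ℝ (Fin d) → ℂ) (hm : StronglyMeasurable f)
    (hf2 : MemLp f 2 volume)
    (hsupp : Function.support f ⊆ Metric.ball (0 : EuclideanSpace ℝ (Fin d)) (1 / 2)) :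
    ∑' k : Fin d → ℤ, ‖∫ z : EuclideanSpace ℝ (Fin d),
        Complex.exp (((-(2 * π * ∑ i, (k i : ℝ) * z i) : ℝ)) * Complex.I) * f z‖ ^ 2
      = ∫ z : EuclideanSpace ℝ (Fin d), ‖f z‖ ^ 2 := by
  set e := (MeasurableEquiv.toLp 2 (Fin d → ℝ)).symm with he
  have mpE : MeasurePreserving e volume volume :=
    EuclideanSpace.volume_preserving_symm_measurableEquiv_toLp (Fin d)
  have hmapE : Measure.map (⇑e) (volume : Measure (EuclideanSpace ℝ (Fin d))) = volume :=
    mpE.map_eq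
  have hmapEsymm : Measure.map (⇑e.symm) (volume : Measure (Fin d → ℝ)) = volume :=
    (mpE.symm _).map_eq
  set fe : (Fin d → ℝ) → ℂ := f ∘ e.symm with hfe
  have hfe_meas : StronglyMeasurable fe := hm.comp_measurable e.symm.measurable
  have hfe2 : MemLp fe 2 (volume : Measure (Fin d → ℝ)) := by
    rw [hfe, ← memLp_map_measure_iff (by rw [hmapEsymm]; exact hm.aestronglyMeasurable)
      e.symm.measurable.aemeasurable, hmapEsymm]
    exact hf2
  have hfe_vanish : ∀ x ∉ box d, fe x = 0 := by
    intro x hx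
    by_contra hne
    apply hx
    intro i _
    have hzsupp : e.symm x ∈ Function.support f := hne
    have hball := hsupp hzsupp
    rw [Metric.mem_ball, dist_zero_right] at hball
    have hco : |x i| ≤ ‖e.symm x‖ := abs_coord_le_norm (e.symm x) i
    have : |x i| < 1/2 := lt_of_le_of_lt hco hball
    rw [abs_lt] at this
    constructor <;> [linarith; linarith]
  set F : Td d → ℂ := fun y => fe (fun i => rep (y i)) with hF
  have hFmeas : StronglyMeasurable F :=
    hfe_meas.comp_measurable
      (measurable_pi_lambda _ fun i => measurable_rep.comp (measurable_pi_apply i))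
  have hbox : ∀ x ∈ box d, F (qpi d x) = fe x := by
    intro x hx
    show fe (fun i => rep ((x i : AddCircle (1:ℝ)))) = fe x
    congr 1
    funext i
    exact rep_coe (hx i (Set.mem_univ i))
  have hF2 : MemLp F 2 (volume : Measure (Td d)) := by
    have hFae : AEStronglyMeasurable F
        (Measure.map (qpi d) ((volume : Measure (Fin d → ℝ)).restrict (box d))) := by
      rw [measurePreserving_qpi.map_eq]
      exact hFmeas.aestronglyMeasurable
    have h1 : eLpNorm F 2 (volume : Measure (Td d))
        = eLpNorm (F ∘ qpi d) 2 ((volume : Measure (Fin d → ℝ)).restrict (box d)) := by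
      rw [← measurePreserving_qpi.map_eq]
      exact eLpNorm_map_measure hFae measurable_qpi.aemeasurable
    have h2 : F ∘ qpi d =ᵐ[(volume : Measure (Fin d → ℝ)).restrict (box d)] fe :=
      (ae_restrict_iff' measurableSet_box).mpr
        (Filter.Eventually.of_forall fun x hx => hbox x hx)
    refine ⟨hFmeas.aestronglyMeasurable, ?_⟩
    rw [h1, eLpNorm_congr_ae h2]
    exact lt_of_le_of_lt (eLpNorm_mono_measure _ Measure.restrict_le_self) hfe2.2
  set FL : Lp ℂ 2 (volume : Measure (Td d)) := hF2.toLp F with hFL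
  have hFLae : FL =ᵐ[volume] F := hF2.coeFn_toLp
  -- the coefficients agree
  have hcoeff : ∀ k : Fin d → ℤ, piCoeff FL k
      = ∫ z : EuclideanSpace ℝ (Fin d),
          Complex.exp (((-(2 * π * ∑ i, (k i : ℝ) * z i) : ℝ)) * Complex.I) * f z := by
    intro k
    have step1 : piCoeff (FL : Td d → ℂ) k = ∫ y, (starRingEnd ℂ) (fpi k y) * F y := by
      show (∫ y : Td d, (starRingEnd ℂ) (fpi k y) * (FL : Td d → ℂ) y)
          = ∫ y, (starRingEnd ℂ) (fpi k y) * F y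
      refine integral_congr_ae ?_
      filter_upwards [hFLae] with y hy
      rw [hy]
    have hcont : StronglyMeasurable fun y : Td d => (starRingEnd ℂ) (fpi k y) * F y :=
      ((Complex.continuous_conj.comp (fpi k).continuous).stronglyMeasurable).mul hFmeas
    have step2 : (∫ y, (starRingEnd ℂ) (fpi k y) * F y)
        = ∫ x in box d, (starRingEnd ℂ) (fpi k (qpi d x)) * F (qpi d x) :=
      integral_torus_eq _ hcont.aestronglyMeasurable
    have step3 : (∫ x in box d, (starRingEnd ℂ) (fpi k (qpi d x)) * F (qpi d x))
        = ∫ x in box d, (starRingEnd ℂ) (fpi k (qpi d x)) * fe x := by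
      refine setIntegral_congr_fun measurableSet_box fun x hx => ?_
      rw [hbox x hx]
    have step4 : (∫ x in box d, (starRingEnd ℂ) (fpi k (qpi d x)) * fe x)
        = ∫ x, (starRingEnd ℂ) (fpi k (qpi d x)) * fe x :=
      setIntegral_eq_integral_of_forall_compl_eq_zero fun x hx => by
        rw [hfe_vanish x hx, mul_zero]
    have hmeas5 : StronglyMeasurable fun x : Fin d → ℝ =>
        (starRingEnd ℂ) (fpi k (qpi d x)) * fe x :=
      (((Complex.continuous_conj.comp (fpi k).continuous).measurable.comp
        measurable_qpi).stronglyMeasurable).mul hfe_meas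
    have step5 : (∫ x, (starRingEnd ℂ) (fpi k (qpi d x)) * fe x)
        = ∫ z : EuclideanSpace ℝ (Fin d), (starRingEnd ℂ) (fpi k (qpi d (e z))) * fe (e z) := by
      rw [← hmapE, integral_map e.measurable.aemeasurable]
      rw [hmapE]
      exact hmeas5.aestronglyMeasurable
    rw [step1, step2, step3, step4, step5]
    refine integral_congr_ae (Filter.Eventually.of_forall fun z => ?_)
    show (starRingEnd ℂ) (fpi k (qpi d (e z))) * fe (e z)
        = Complex.exp (((-(2 * π * ∑ i, (k i : ℝ) * z i) : ℝ)) * Complex.I) * f z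
    rw [conj_fpi_qpi]
    rfl
  -- the L² norms agree
  have hnorm : (∫ y : Td d, ‖FL y‖ ^ 2) = ∫ z : EuclideanSpace ℝ (Fin d), ‖f z‖ ^ 2 := by
    have n1 : (∫ y : Td d, ‖FL y‖ ^ 2) = ∫ y : Td d, ‖F y‖ ^ 2 := by
      refine integral_congr_ae ?_
      filter_upwards [hFLae] with y hy
      rw [hy]
    have n2 : (∫ y : Td d, ‖F y‖ ^ 2) = ∫ x in box d, ‖F (qpi d x)‖ ^ 2 :=
      integral_torus_eq _ ((hFmeas.norm.aestronglyMeasurable).pow 2)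
    have n3 : (∫ x in box d, ‖F (qpi d x)‖ ^ 2) = ∫ x in box d, ‖fe x‖ ^ 2 := by
      refine setIntegral_congr_fun measurableSet_box fun x hx => ?_
      rw [hbox x hx]
    have n4 : (∫ x in box d, ‖fe x‖ ^ 2) = ∫ x, ‖fe x‖ ^ 2 :=
      setIntegral_eq_integral_of_forall_compl_eq_zero fun x hx => by
        rw [hfe_vanish x hx]; simp
    have n5 : (∫ x, ‖fe x‖ ^ 2) = ∫ z : EuclideanSpace ℝ (Fin d), ‖fe (e z)‖ ^ 2 := by
      rw [← hmapE, integral_map e.measurable.aemeasurable]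
      rw [hmapE]
      exact (hfe_meas.norm.aestronglyMeasurable).pow 2
    have n6 : (∫ z : EuclideanSpace ℝ (Fin d), ‖fe (e z)‖ ^ 2)
        = ∫ z : EuclideanSpace ℝ (Fin d), ‖f z‖ ^ 2 := by
      refine integral_congr_ae (Filter.Eventually.of_forall fun z => ?_)
      rw [hfe]
      show ‖f (e.symm (e z))‖ ^ 2 = ‖f z‖ ^ 2
      rw [e.symm_apply_apply]
    rw [n1, n2, n3, n4, n5, n6]
  have := tsum_sq_piCoeff FL
  rw [hnorm] at this
  rw [← this]
  exact tsum_congr fun k => by rw [hcoeff k]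


/-! ### Gabor coefficients with the indicator window -/

/-- The indicator window. -/
abbrev gInd : ℝ → ℂ := Set.indicator (Set.Icc (-(1 / 2) : ℝ) (1 / 2)) fun _ => (1 : ℂ)

lemma inner_lt_half {f : EuclideanSpace ℝ (Fin d) → ℂ}
    (hsupp : Function.support f ⊆ Metric.ball (0 : EuclideanSpace ℝ (Fin d)) (1 / 2))
    {u : EuclideanSpace ℝ (Fin d)} (hu : ‖u‖ = 1) {x : EuclideanSpace ℝ (Fin d)}
    (hx : f x ≠ 0) : |(inner ℝ u x : ℝ)| < 1 / 2 := by
  have hb := hsupp (Function.mem_support.mpr hx)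
  rw [mem_ball_zero_iff] at hb
  calc |(inner ℝ u x : ℝ)| ≤ ‖u‖ * ‖x‖ := abs_real_inner_le_norm u x
    _ = ‖x‖ := by rw [hu, one_mul]
    _ < 1 / 2 := hb

lemma gabor_ne_zero_term {f : EuclideanSpace ℝ (Fin d) → ℂ}
    (hsupp : Function.support f ⊆ Metric.ball (0 : EuclideanSpace ℝ (Fin d)) (1 / 2))
    {u : EuclideanSpace ℝ (Fin d)} (hu : ‖u‖ = 1) (m : ℝ) {n : ℤ} (hn : n ≠ 0) :
    gaborCoef f gInd m (n : ℝ) u = 0 := by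
  have h0 : ∀ x : EuclideanSpace ℝ (Fin d),
      f x * Complex.exp ((-(2 * Real.pi * m * (inner ℝ u x : ℝ)) : ℝ) * Complex.I) *
        (starRingEnd ℂ) (gInd ((inner ℝ u x : ℝ) - (n : ℝ))) = 0 := by
    intro x
    rcases eq_or_ne (f x) 0 with hfx | hfx
    · rw [hfx, zero_mul, zero_mul]
    · have hlt := inner_lt_half hsupp hu hfx
      have hg : gInd ((inner ℝ u x : ℝ) - (n : ℝ)) = 0 := by
        apply Set.indicator_of_notMem
        intro hmem
        rw [Set.mem_Icc] at hmem
        have h1 : (1 : ℝ) ≤ |(n : ℝ)| := by exact_mod_cast Int.one_le_abs hn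
        rw [le_abs] at h1
        rw [abs_lt] at hlt
        rcases h1 with h | h <;> linarith [hmem.1, hmem.2, hlt.1, hlt.2]
      rw [hg, map_zero, mul_zero]
  rw [gaborCoef]
  rw [integral_congr_ae (Filter.Eventually.of_forall h0)]
  exact integral_zero _ _

lemma gabor_zero_term {f : EuclideanSpace ℝ (Fin d) → ℂ}
    (hsupp : Function.support f ⊆ Metric.ball (0 : EuclideanSpace ℝ (Fin d)) (1 / 2))
    {u : EuclideanSpace ℝ (Fin d)} (hu : ‖u‖ = 1) (m : ℝ) :
    gaborCoef f gInd m 0 u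
      = ∫ x : EuclideanSpace ℝ (Fin d),
          Complex.exp ((-(2 * Real.pi * m * (inner ℝ u x : ℝ)) : ℝ) * Complex.I) * f x := by
  rw [gaborCoef]
  refine integral_congr_ae (Filter.Eventually.of_forall fun x => ?_)
  dsimp only
  rcases eq_or_ne (f x) 0 with hfx | hfx
  · rw [hfx, zero_mul, zero_mul, mul_zero]
  · have hlt := inner_lt_half hsupp hu hfx
    have hg : gInd ((inner ℝ u x : ℝ) - 0) = 1 := by
      rw [sub_zero]
      apply Set.indicator_of_mem
      rw [Set.mem_Icc]; rw [abs_lt] at hlt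
      constructor <;> linarith [hlt.1, hlt.2]
    rw [hg, map_one, mul_one, mul_comm]

/-! ### The lattice equivalence -/

/-- integer vector as a point of `ℝ^d` -/
def kvec (k : Fin d → ℤ) : EuclideanSpace ℝ (Fin d) := WithLp.toLp 2 (fun i => (k i : ℝ))

lemma kvec_mem (k : Fin d → ℤ) : kvec k ∈ intLattice d := fun i => ⟨k i, rfl⟩

/-- the obvious equivalence `ℤ^d ≃ intLattice d` -/
def latEquiv (d : ℕ) : (Fin d → ℤ) ≃ intLattice d where
  toFun k := ⟨kvec k, kvec_mem k⟩
  invFun x := fun i => (x.2 i).choose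
  left_inv k := by
    funext i
    have hs : (kvec k i : ℝ) = (((kvec_mem k) i).choose : ℝ) := ((kvec_mem k) i).choose_spec
    have : ((k i : ℝ)) = ((((kvec_mem k) i).choose : ℤ) : ℝ) := hs
    exact (Int.cast_injective this).symm
  right_inv x := by
    apply Subtype.ext
    ext i
    exact ((x.2 i).choose_spec).symm

lemma inner_kvec (k : Fin d → ℤ) (z : EuclideanSpace ℝ (Fin d)) :
    (inner ℝ (kvec k) z : ℝ) = ∑ i, (k i : ℝ) * z i := by
  rw [PiLp.inner_apply]
  refine Finset.sum_congr rfl fun i _ => ?_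
  simp [kvec, mul_comm]

end GaborAux


/-- with `g = χ_{−1/2,1/2]}` and `Γ ⊂ S^{d−1} × ℝ` such that `(u,m) ↦ mu`
is a bijection of `Γ` onto `ℤ^d`, the system `{g_{m,n,u}}_{(m,n,u) ∈ Λ}`,
`Λ = {(m,n,u) : (u,m) ∈ Γ, n ∈ ℤ}`, is a Parseval frame for the functions in `L²(ℝ^d)`
supported in `B_{1/2}(0)`: `Σ_{(m,n,u)∈Λ} |⟨f, g_{m,n,u}⟩|² = ‖f‖₂²`. -/
theorem indicator_directional_gabor_parseval {d : ℕ} (hd : 1 ≤ d)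
    (Γ : Set (EuclideanSpace ℝ (Fin d) × ℝ))
    (hΓsphere : ∀ p ∈ Γ, ‖p.1‖ = 1)
    (hΓbij : Set.BijOn (fun p : EuclideanSpace ℝ (Fin d) × ℝ => p.2 • p.1) Γ (intLattice d))
    (f : EuclideanSpace ℝ (Fin d) → ℂ) (hf2 : MemLp f 2 volume)
    (hsupp : Function.support f ⊆ Metric.ball (0 : EuclideanSpace ℝ (Fin d)) (1 / 2)) :
    (∑' p : Γ, ∑' n : ℤ,
        ‖gaborCoef f (Set.indicator (Set.Icc (-(1 / 2) : ℝ) (1 / 2)) fun _ => (1 : ℂ))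
          (p : EuclideanSpace ℝ (Fin d) × ℝ).2 (n : ℝ)
          (p : EuclideanSpace ℝ (Fin d) × ℝ).1‖ ^ 2)
      = ∫ x : EuclideanSpace ℝ (Fin d), ‖f x‖ ^ 2 := by
  classical
  set B := Metric.ball (0 : EuclideanSpace ℝ (Fin d)) (1 / 2) with hB
  set f₀ : EuclideanSpace ℝ (Fin d) → ℂ := B.indicator (hf2.1.mk f) with hf₀
  have hm₀ : StronglyMeasurable f₀ := (hf2.1.stronglyMeasurable_mk).indicator measurableSet_ball
  have hae : f =ᵐ[volume] f₀ := by
    have h1 : f = B.indicator f := (Set.indicator_eq_self.mpr hsupp).symm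
    nth_rewrite 1 [h1]
    filter_upwards [hf2.1.ae_eq_mk] with x hx
    simp only [hf₀, Set.indicator_apply, hx]
  have hsupp₀ : Function.support f₀ ⊆ B := Set.support_indicator_subset
  have hf2₀ : MemLp f₀ 2 volume := hf2.ae_eq hae
  have hgabor_congr : ∀ (m n : ℝ) (u : EuclideanSpace ℝ (Fin d)),
      gaborCoef f GaborAux.gInd m n u = gaborCoef f₀ GaborAux.gInd m n u := by
    intro m n u
    refine integral_congr_ae ?_
    filter_upwards [hae] with x hx
    rw [hx]
  -- collapse the inner sums
  have hptn : ∀ p : Γ, (∑' n : ℤ,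
      ‖gaborCoef f GaborAux.gInd (p : EuclideanSpace ℝ (Fin d) × ℝ).2 (n : ℝ)
        (p : EuclideanSpace ℝ (Fin d) × ℝ).1‖ ^ 2)
      = ‖∫ z : EuclideanSpace ℝ (Fin d),
          Complex.exp ((-(2 * Real.pi *
            (inner ℝ ((p : EuclideanSpace ℝ (Fin d) × ℝ).2 •
              (p : EuclideanSpace ℝ (Fin d) × ℝ).1) z : ℝ)) : ℝ) * Complex.I) * f₀ z‖ ^ 2 := by
    rintro ⟨⟨u, m⟩, hp⟩
    have hu : ‖u‖ = 1 := hΓsphere (u, m) hp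
    have hzero : ∀ n : ℤ, n ≠ 0 →
        ‖gaborCoef f GaborAux.gInd m (n : ℝ) u‖ ^ 2 = 0 := by
      intro n hn
      rw [hgabor_congr, GaborAux.gabor_ne_zero_term hsupp₀ hu _ hn]
      simp
    refine (tsum_eq_single (0 : ℤ) hzero).trans ?_
    show ‖gaborCoef f GaborAux.gInd m ((0 : ℤ) : ℝ) u‖ ^ 2 = _
    rw [Int.cast_zero, hgabor_congr, GaborAux.gabor_zero_term hsupp₀ hu m]
    simp only [real_inner_smul_left, mul_assoc]
  rw [tsum_congr hptn]
  -- reindex the outer sum over the lattice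
  set Φ : EuclideanSpace ℝ (Fin d) → ℝ := fun v =>
    ‖∫ z : EuclideanSpace ℝ (Fin d),
        Complex.exp ((-(2 * Real.pi * (inner ℝ v z : ℝ)) : ℝ) * Complex.I) * f₀ z‖ ^ 2 with hΦ
  have hreindex1 : (∑' p : Γ, Φ ((p : EuclideanSpace ℝ (Fin d) × ℝ).2 •
      (p : EuclideanSpace ℝ (Fin d) × ℝ).1)) = ∑' q : intLattice d, Φ q := by
    have := Equiv.tsum_eq (hΓbij.equiv _) (fun q : intLattice d => Φ q)
    rw [← this]
    rfl
  have hreindex2 : (∑' q : intLattice d, Φ q) = ∑' k : Fin d → ℤ, Φ (GaborAux.kvec k) := by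
    rw [← Equiv.tsum_eq (GaborAux.latEquiv d) (fun q : intLattice d => Φ q)]
    rfl
  rw [hreindex1, hreindex2]
  have hpar := GaborAux.parseval_cube f₀ hm₀ hf2₀ hsupp₀
  have hmatch : ∀ k : Fin d → ℤ, Φ (GaborAux.kvec k)
      = ‖∫ z : EuclideanSpace ℝ (Fin d),
          Complex.exp (((-(2 * Real.pi * ∑ i, (k i : ℝ) * z i) : ℝ)) * Complex.I) * f₀ z‖ ^ 2 := by
    intro k
    rw [hΦ]
    simp only [GaborAux.inner_kvec]
  rw [tsum_congr hmatch, hpar]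
  refine integral_congr_ae ?_
  filter_upwards [hae] with x hx
  rw [hx]


end
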